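/- Let $G=K_3$ with edge multiplicities, $S=\mathbb{K}[x_0,x_1,x_2]$, and let $J=\langle (x_0-x_1)^{m_{01}},(x_0-x_2)^{m_{02}},(x_1-x_2)^{m_{12}}\rangle$. Then the module of multiderivations $D(\mathcal{A}_{K_3},\mathbf m)=\{\theta\in\bigoplus_i S\partial_i : \theta(x_i-x_j)\in\langle(x_i-x_j)^{m_{ij}}\rangle\}$ is isomorphic as an $S$-module to $S\oplus \mathrm{syz}(J)$, where $\mathrm{syz}(J)$ is the module of syzygies on the three listed generators. In particular $D(\mathcal{A}_{K_3},\mathbf m)$ is free for every choice of multiplicities. -/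

import Mathlib

open MvPolynomial

set_option maxHeartbeats 1000000
noncomputable section M15
namespace M15
variable {K : Type*} [Field K]
local notation "T2" => MvPolynomial (Fin 2) K
lemma sub_aeval_mem {n : ℕ} (s : Fin n → MvPolynomial (Fin n) K)
    (I : Ideal (MvPolynomial (Fin n) K))
    (hs : ∀ i, (X i : MvPolynomial (Fin n) K) - s i ∈ I) (P : MvPolynomial (Fin n) K) :
    P - aeval s P ∈ I := by
  induction P using MvPolynomial.induction_on with
  | C a => simp
  | add p q hp hq =>
      have := I.add_mem hp hq
      simpa [map_add, add_sub_add_comm] using this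
  | mul_X p i hp =>
      have h1 : p * X i - aeval s (p * X i)
          = (p - aeval s p) * X i + aeval s p * (X i - s i) := by
        rw [map_mul, aeval_X]; ring
      rw [h1]
      exact I.add_mem (I.mul_mem_right _ hp) (I.mul_mem_left _ (hs i))

lemma prime_of_section {n : ℕ} {A : Type*} [CommRing A] [IsDomain A] [Algebra K A]
    (τ : MvPolynomial (Fin n) K →ₐ[K] A) (ι : A →ₐ[K] MvPolynomial (Fin n) K)
    (s : Fin n → MvPolynomial (Fin n) K) (ℓ : MvPolynomial (Fin n) K)
    (hcomp : (MvPolynomial.aeval s : MvPolynomial (Fin n) K →ₐ[K] MvPolynomial (Fin n) K)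
      = ι.comp τ)
    (hs : ∀ i, (X i : MvPolynomial (Fin n) K) - s i ∈ Ideal.span {ℓ})
    (hτ : τ ℓ = 0) (h0 : ℓ ≠ 0) : Prime ℓ := by
  rw [← Ideal.span_singleton_prime h0]
  have hker : Ideal.span {ℓ} = RingHom.ker (τ : MvPolynomial (Fin n) K →+* A) := by
    apply le_antisymm
    · rw [Ideal.span_le]
      intro x hx
      rcases hx with rfl
      simpa [RingHom.mem_ker] using hτ
    · intro P hP
      have h2 : aeval s P = ι (τ P) := by
        have := congrArg (fun (F : MvPolynomial (Fin n) K →ₐ[K] MvPolynomial (Fin n) K) => F P) hcomp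
        simpa using this
      have hP0 : τ P = 0 := hP
      have h3 := sub_aeval_mem s (Ideal.span {ℓ}) hs P
      rwa [h2, hP0, map_zero, sub_zero] at h3
  rw [hker]
  exact RingHom.ker_isPrime _

lemma ne_zero_of_eval {n : ℕ} (P : MvPolynomial (Fin n) K) (v : Fin n → K)
    (h : eval v P ≠ 0) : P ≠ 0 := fun hP => by simp [hP] at h

lemma not_dvd_of_eval {n : ℕ} (P Q : MvPolynomial (Fin n) K) (v : Fin n → K)
    (hP : eval v P = 0) (hQ : eval v Q ≠ 0) : ¬ P ∣ Q := by
  rintro ⟨r, rfl⟩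
  simp [hP] at hQ

lemma prime_X0 : Prime (X 0 : MvPolynomial (Fin 2) K) := by
  apply prime_of_section (aeval ![0, X 0] : _ →ₐ[K] MvPolynomial (Fin 1) K)
    (aeval ![X 1]) ![0, X 1]
  · apply MvPolynomial.algHom_ext
    intro i
    fin_cases i <;> simp
  · intro i
    fin_cases i
    · simpa using Ideal.mem_span_singleton_self (X _ : MvPolynomial (Fin 2) K)
    · simp
  · simp
  · exact ne_zero_of_eval _ ![1, 1] (by simp)

lemma prime_X1 : Prime (X 1 : MvPolynomial (Fin 2) K) := by
  apply prime_of_section (aeval ![X 0, 0] : _ →ₐ[K] MvPolynomial (Fin 1) K)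
    (aeval ![X 0]) ![X 0, 0]
  · apply MvPolynomial.algHom_ext
    intro i
    fin_cases i <;> simp
  · intro i
    fin_cases i
    · simp
    · simpa using Ideal.mem_span_singleton_self (X _ : MvPolynomial (Fin 2) K)
  · simp
  · exact ne_zero_of_eval _ ![1, 1] (by simp)

lemma prime_X1_sub_X0 : Prime (X 1 - X 0 : MvPolynomial (Fin 2) K) := by
  apply prime_of_section (aeval ![X 0, X 0] : _ →ₐ[K] MvPolynomial (Fin 1) K)
    (aeval ![X 0]) ![X 0, X 0]
  · apply MvPolynomial.algHom_ext
    intro i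
    fin_cases i <;> simp
  · intro i
    fin_cases i
    · simp
    · exact Ideal.mem_span_singleton_self _
  · simp
  · exact ne_zero_of_eval _ ![0, 1] (by simp)

lemma prime_w3 : Prime (X 1 - X 2 : MvPolynomial (Fin 3) K) := by
  apply prime_of_section (aeval ![X 0, X 1, X 1] : _ →ₐ[K] MvPolynomial (Fin 2) K)
    (aeval ![X 0, X 1]) ![X 0, X 1, X 1]
  · apply MvPolynomial.algHom_ext
    intro i
    fin_cases i <;> simp
  · intro i
    fin_cases i
    · simp
    · simp
    · show (X 2 - X 1 : MvPolynomial (Fin 3) K) ∈ Ideal.span {X 1 - X 2}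
      have h : (X 2 - X 1 : MvPolynomial (Fin 3) K) = -(X 1 - X 2) := by ring
      rw [h]
      exact neg_mem (Ideal.mem_span_singleton_self _)
  · simp
  · exact ne_zero_of_eval _ ![0, 1, 0] (by simp)

lemma degree_fin2 (d : Fin 2 →₀ ℕ) : Finsupp.degree d = d 0 + d 1 := by
  rw [Finsupp.degree, ← Fin.sum_univ_two (fun i => d i)]
  exact Finset.sum_subset (Finset.subset_univ _)
    (fun x _ hx => Finsupp.notMem_support_iff.mp hx)

lemma hom_deg_fin2 {P : T2} {n : ℕ} (hP : P.IsHomogeneous n) {d : Fin 2 →₀ ℕ}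
    (hd : d ∈ P.support) : d 0 + d 1 = n := by
  have h := hP (mem_support_iff.mp hd)
  rw [show (Finsupp.weight 1 : (Fin 2 →₀ ℕ) →+ ℕ) = Finsupp.weight (fun _ => 1) from rfl,
    ← Finsupp.degree_eq_weight_one, degree_fin2] at h
  exact h

lemma hom_mod (ℓ z : T2) (c : Fin 2 → K)
    (hdv : ∀ i, ℓ ∣ (X i - C (c i) * z)) {P : T2} {n : ℕ} (hP : P.IsHomogeneous n) :
    ∃ γ : K, ℓ ∣ P - C γ * z ^ n := by
  refine ⟨∑ d ∈ P.support, coeff d P * (c 0 ^ d 0 * c 1 ^ d 1), ?_⟩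
  have key : ∀ d ∈ P.support,
      ℓ ∣ (monomial d (coeff d P) : T2) - C (coeff d P * (c 0 ^ d 0 * c 1 ^ d 1)) * z ^ n := by
    intro d hd
    have hdeg : d 0 + d 1 = n := hom_deg_fin2 hP hd
    have h0 : ℓ ∣ (X 0 : T2) ^ (d 0) - (C (c 0) * z) ^ (d 0) :=
      (hdv 0).trans (sub_dvd_pow_sub_pow _ _ _)
    have h1 : ℓ ∣ (X 1 : T2) ^ (d 1) - (C (c 1) * z) ^ (d 1) :=
      (hdv 1).trans (sub_dvd_pow_sub_pow _ _ _)
    have hprod : ℓ ∣ (X 0 : T2) ^ (d 0) * (X 1) ^ (d 1)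
        - (C (c 0) * z) ^ (d 0) * (C (c 1) * z) ^ (d 1) := by
      have h2 := dvd_add (h1.mul_left ((X 0 : T2) ^ (d 0)))
        (h0.mul_right ((C (c 1) * z) ^ (d 1)))
      convert h2 using 1
      ring
    have hmon : (monomial d (coeff d P) : T2)
        = C (coeff d P) * ((X 0) ^ (d 0) * (X 1) ^ (d 1)) := by
      rw [monomial_eq]
      congr 1
      rw [Finsupp.prod_pow]
      exact Fin.prod_univ_two _
    have hrhs : (C (coeff d P * (c 0 ^ d 0 * c 1 ^ d 1)) : T2) * z ^ n
        = C (coeff d P) * ((C (c 0) * z) ^ (d 0) * (C (c 1) * z) ^ (d 1)) := by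
      rw [← hdeg]
      simp only [map_mul, map_pow]
      ring
    rw [hmon, hrhs, ← mul_sub]
    exact hprod.mul_left _
  have hsplit : P - C (∑ d ∈ P.support, coeff d P * (c 0 ^ d 0 * c 1 ^ d 1)) * z ^ n
      = ∑ d ∈ P.support,
        ((monomial d (coeff d P) : T2) - C (coeff d P * (c 0 ^ d 0 * c 1 ^ d 1)) * z ^ n) := by
    rw [Finset.sum_sub_distrib, ← as_sum, map_sum, Finset.sum_mul]
  rw [hsplit]
  exact Finset.dvd_sum key

lemma hom_of_mul_form {ℓ P : T2} {n : ℕ} (hl : ℓ.IsHomogeneous 1) (hl0 : ℓ ≠ 0)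
    (h : (ℓ * P).IsHomogeneous n) : P = 0 ∨ ∃ m, P.IsHomogeneous m ∧ m + 1 = n := by
  by_cases hP : P = 0
  · exact Or.inl hP
  right
  have key : ℓ * P = ∑ i ∈ Finset.range (P.totalDegree + 1), ℓ * homogeneousComponent i P := by
    rw [← Finset.mul_sum, sum_homogeneousComponent]
  have key2 : ℓ * P = homogeneousComponent n (ℓ * P) := by
    rw [homogeneousComponent_of_mem ((mem_homogeneousSubmodule _ _).mpr h), if_pos rfl]
  have key4 : ∀ i, homogeneousComponent n (ℓ * homogeneousComponent i P)
      = if n = 1 + i then ℓ * homogeneousComponent i P else 0 := fun i =>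
    homogeneousComponent_of_mem ((mem_homogeneousSubmodule _ _).mpr
      (hl.mul (homogeneousComponent_isHomogeneous i P)))
  have key3 : ℓ * P = ∑ i ∈ Finset.range (P.totalDegree + 1),
      if n = 1 + i then ℓ * homogeneousComponent i P else 0 := by
    conv_lhs => rw [key2, key]
    rw [map_sum]
    exact Finset.sum_congr rfl fun i _ => key4 i
  cases n with
  | zero =>
      exfalso
      apply mul_ne_zero hl0 hP
      rw [key3]
      exact Finset.sum_eq_zero fun i _ => if_neg (by omega)
  | succ m =>
      have key5 : ℓ * P = if m ∈ Finset.range (P.totalDegree + 1)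
          then ℓ * homogeneousComponent m P else 0 := by
        rw [key3, ← Finset.sum_ite_eq' (Finset.range (P.totalDegree + 1)) m
          (fun i => ℓ * homogeneousComponent i P)]
        exact Finset.sum_congr rfl fun i _ => by
          congr 1
          simp only [eq_iff_iff]
          omega
      by_cases hm : m ∈ Finset.range (P.totalDegree + 1)
      · rw [if_pos hm] at key5
        have hPm : P = homogeneousComponent m P := mul_left_cancel₀ hl0 key5
        exact ⟨m, by rw [hPm]; exact homogeneousComponent_isHomogeneous m P, rfl⟩
      · rw [if_neg hm] at key5
        exact absurd key5 (mul_ne_zero hl0 hP)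

def Sh (P : MvPolynomial (Fin 2) K) (k d : ℕ) : Prop :=
  P = 0 ∨ ∃ e, P.IsHomogeneous e ∧ e + k = d

lemma Sh.neg {P : MvPolynomial (Fin 2) K} {k d : ℕ} (h : Sh P k d) : Sh (-P) k d := by
  rcases h with rfl | ⟨e, he, hek⟩
  · exact Or.inl (neg_zero)
  · exact Or.inr ⟨e, he.neg, hek⟩

lemma Sh.mul_form {P ℓ : MvPolynomial (Fin 2) K} {k d : ℕ} (hl : ℓ.IsHomogeneous 1)
    (h : Sh P k d) : Sh (ℓ * P) k (d + 1) := by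
  rcases h with rfl | ⟨e, he, hek⟩
  · exact Or.inl (mul_zero ℓ)
  · exact Or.inr ⟨1 + e, hl.mul he, by omega⟩

variable (K) in
structure SDat (f g h : MvPolynomial (Fin 2) K) (df dg dh : ℕ) where
  A1 : MvPolynomial (Fin 2) K
  B1 : MvPolynomial (Fin 2) K
  C1 : MvPolynomial (Fin 2) K
  A2 : MvPolynomial (Fin 2) K
  B2 : MvPolynomial (Fin 2) K
  C2 : MvPolynomial (Fin 2) K
  lam : K
  d1 : ℕ
  d2 : ℕ
  hlam : lam ≠ 0
  syz1 : A1 * f + B1 * g + C1 * h = 0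
  syz2 : A2 * f + B2 * g + C2 * h = 0
  m1 : B1 * C2 - C1 * B2 = C lam * f
  m2 : C1 * A2 - A1 * C2 = C lam * g
  m3 : A1 * B2 - B1 * A2 = C lam * h
  sA1 : Sh A1 df d1
  sB1 : Sh B1 dg d1
  sC1 : Sh C1 dh d1
  sA2 : Sh A2 df d2
  sB2 : Sh B2 dg d2
  sC2 : Sh C2 dh d2

variable {f g h : MvPolynomial (Fin 2) K} {df dg dh : ℕ}

def SDat.rot (S : SDat K f g h df dg dh) : SDat K g h f dg dh df where
  A1 := S.B1
  B1 := S.C1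
  C1 := S.A1
  A2 := S.B2
  B2 := S.C2
  C2 := S.A2
  lam := S.lam
  d1 := S.d1
  d2 := S.d2
  hlam := S.hlam
  syz1 := by linear_combination S.syz1
  syz2 := by linear_combination S.syz2
  m1 := by linear_combination S.m2
  m2 := by linear_combination S.m3
  m3 := by linear_combination S.m1
  sA1 := S.sB1
  sB1 := S.sC1
  sC1 := S.sA1
  sA2 := S.sB2
  sB2 := S.sC2
  sC2 := S.sA2

def SDat.swap (S : SDat K f g h df dg dh) : SDat K f g h df dg dh where
  A1 := S.A2
  B1 := S.B2
  C1 := S.C2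
  A2 := S.A1
  B2 := S.B1
  C2 := S.C1
  lam := -S.lam
  d1 := S.d2
  d2 := S.d1
  hlam := neg_ne_zero.mpr S.hlam
  syz1 := S.syz2
  syz2 := S.syz1
  m1 := by rw [map_neg]; linear_combination -S.m1
  m2 := by rw [map_neg]; linear_combination -S.m2
  m3 := by rw [map_neg]; linear_combination -S.m3
  sA1 := S.sA2
  sB1 := S.sB2
  sC1 := S.sC2
  sA2 := S.sA1
  sB2 := S.sB1
  sC2 := S.sC1

theorem step_core (ℓ z : MvPolynomial (Fin 2) K) (c : Fin 2 → K)
    (hp : Prime ℓ) (hlhom : ℓ.IsHomogeneous 1) (hz : z.IsHomogeneous 1)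
    (hdv : ∀ i, ℓ ∣ (X i - C (c i) * z))
    (S : SDat K f g h df dg dh)
    (hC1 : ¬ ℓ ∣ S.C1) (hsel : ℓ ∣ S.C2 ∨ S.d1 ≤ S.d2) :
    Nonempty (SDat K f g (ℓ * h) df dg (dh + 1)) := by
  obtain ⟨e1, hhom1, he1⟩ := S.sC1.resolve_left (fun h0 => hC1 (h0 ▸ dvd_zero ℓ))
  obtain ⟨γ1, hγ1dvd⟩ := hom_mod ℓ z c hdv hhom1
  have hγ1 : γ1 ≠ 0 := by rintro rfl; apply hC1; simpa using hγ1dvd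
  have main : ∃ p0 : MvPolynomial (Fin 2) K, (ℓ ∣ p0 * S.C1 - S.C2) ∧
      (∀ (P Q : MvPolynomial (Fin 2) K) (kk : ℕ),
        Sh P kk S.d1 → Sh Q kk S.d2 → Sh (p0 * P - Q) kk S.d2) := by
    by_cases hC2 : ℓ ∣ S.C2
    · refine ⟨0, by simpa using hC2.neg_right, ?_⟩
      intro P Q kk _ hQ
      simpa using hQ.neg
    · have hC2ne : S.C2 ≠ 0 := fun h0 => hC2 (h0 ▸ dvd_zero ℓ)
      obtain ⟨e2, hhom2, he2⟩ := S.sC2.resolve_left hC2ne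
      obtain ⟨γ2, hγ2dvd⟩ := hom_mod ℓ z c hdv hhom2
      have hd12 : S.d1 ≤ S.d2 := hsel.resolve_left hC2
      have he12 : e1 ≤ e2 := by omega
      have hp0hom : (C (γ2 * γ1⁻¹) * z ^ (e2 - e1) :
          MvPolynomial (Fin 2) K).IsHomogeneous (e2 - e1) :=
        (by simpa using hz.pow (e2 - e1) : (z ^ (e2 - e1)).IsHomogeneous (e2 - e1)).C_mul _
      refine ⟨C (γ2 * γ1⁻¹) * z ^ (e2 - e1), ?_, ?_⟩
      · have hz2 : z ^ (e2 - e1) * z ^ e1 = z ^ e2 := by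
          rw [← pow_add]
          congr 1
          omega
        have hkey : (C (γ2 * γ1⁻¹) * z ^ (e2 - e1)) * (C γ1 * z ^ e1)
            = C γ2 * z ^ e2 := by
          calc (C (γ2 * γ1⁻¹) * z ^ (e2 - e1)) * (C γ1 * z ^ e1)
              = (C (γ2 * γ1⁻¹) * C γ1) * (z ^ (e2 - e1) * z ^ e1) := by ring
            _ = C γ2 * z ^ e2 := by
                rw [hz2, ← map_mul, mul_assoc, inv_mul_cancel₀ hγ1, mul_one]
        have hsub := dvd_sub (hγ1dvd.mul_left (C (γ2 * γ1⁻¹) * z ^ (e2 - e1))) hγ2dvd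
        have heq : (C (γ2 * γ1⁻¹) * z ^ (e2 - e1)) * (S.C1 - C γ1 * z ^ e1)
            - (S.C2 - C γ2 * z ^ e2) = (C (γ2 * γ1⁻¹) * z ^ (e2 - e1)) * S.C1 - S.C2 := by
          linear_combination -hkey
        rwa [heq] at hsub
      · intro P Q kk hP hQ
        rcases hP with rfl | ⟨eP, hPhom, hePk⟩
        · simpa using hQ.neg
        · rcases hQ with rfl | ⟨eQ, hQhom, heQk⟩
          · refine Or.inr ⟨(e2 - e1) + eP, by simpa using hp0hom.mul hPhom, by omega⟩
          · refine Or.inr ⟨(e2 - e1) + eP, (hp0hom.mul hPhom).sub ?_, by omega⟩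
            have heQ : (e2 - e1) + eP = eQ := by omega
            rw [heQ]
            exact hQhom
  obtain ⟨p0, hdvd, hShH⟩ := main
  obtain ⟨C', hC'⟩ := hdvd
  have hShC' : Sh C' (dh + 1) S.d2 := by
    have hSh3 : Sh (p0 * S.C1 - S.C2) dh S.d2 := hShH _ _ _ S.sC1 S.sC2
    rcases hSh3 with hz0 | ⟨e, hhom, he⟩
    · rw [hz0] at hC'
      have : C' = 0 := by
        rcases mul_eq_zero.mp hC'.symm with h' | h'
        · exact absurd h' hp.ne_zero
        · exact h'
      exact Or.inl this
    · rw [hC'] at hhom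
      rcases hom_of_mul_form hlhom hp.ne_zero hhom with h0 | ⟨m, hm, hm1⟩
      · exact Or.inl h0
      · exact Or.inr ⟨m, hm, by omega⟩
  refine ⟨{
      A1 := ℓ * S.A1
      B1 := ℓ * S.B1
      C1 := S.C1
      A2 := p0 * S.A1 - S.A2
      B2 := p0 * S.B1 - S.B2
      C2 := C'
      lam := -S.lam
      d1 := S.d1 + 1
      d2 := S.d2
      hlam := neg_ne_zero.mpr S.hlam
      syz1 := by linear_combination ℓ * S.syz1
      syz2 := by linear_combination p0 * S.syz1 - S.syz2 + h * hC'.symm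
      m1 := by rw [map_neg]; linear_combination S.B1 * hC'.symm - S.m1
      m2 := by rw [map_neg]; linear_combination -S.A1 * hC'.symm - S.m2
      m3 := by rw [map_neg]; linear_combination (-ℓ) * S.m3
      sA1 := S.sA1.mul_form hlhom
      sB1 := S.sB1.mul_form hlhom
      sC1 := Or.inr ⟨e1, hhom1, by omega⟩
      sA2 := hShH _ _ _ S.sA1 S.sA2
      sB2 := hShH _ _ _ S.sB1 S.sB2
      sC2 := hShC' }⟩

theorem step (ℓ z : MvPolynomial (Fin 2) K) (c : Fin 2 → K)
    (hp : Prime ℓ) (hlhom : ℓ.IsHomogeneous 1) (hz : z.IsHomogeneous 1)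
    (hdv : ∀ i, ℓ ∣ (X i - C (c i) * z)) (hf : ¬ ℓ ∣ f)
    (S : SDat K f g h df dg dh) :
    Nonempty (SDat K f g (ℓ * h) df dg (dh + 1)) := by
  by_cases h1 : ℓ ∣ S.C1
  · by_cases h2 : ℓ ∣ S.C2
    · exfalso
      have hdl : ℓ ∣ C S.lam * f := by
        rw [← S.m1]
        exact dvd_sub (h2.mul_left S.B1) (h1.mul_right S.B2)
      rcases hp.2.2 _ _ hdl with hu | hf'
      · exact hp.not_unit (isUnit_of_dvd_unit hu (S.hlam.isUnit.map C))
      · exact hf hf'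
    · exact step_core ℓ z c hp hlhom hz hdv S.swap h2 (Or.inl h1)
  · rcases le_total S.d1 S.d2 with hle | hle
    · exact step_core ℓ z c hp hlhom hz hdv S h1 (Or.inr hle)
    · by_cases h2 : ℓ ∣ S.C2
      · exact step_core ℓ z c hp hlhom hz hdv S h1 (Or.inl h2)
      · exact step_core ℓ z c hp hlhom hz hdv S.swap h2 (Or.inr hle)

def base : SDat K (X 0) (X 1) (X 1 - X 0) 1 1 1 where
  A1 := 1
  B1 := -1
  C1 := 1
  A2 := X 1 - X 0
  B2 := 0
  C2 := -(X 0)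
  lam := 1
  d1 := 1
  d2 := 2
  hlam := one_ne_zero
  syz1 := by ring
  syz2 := by ring
  m1 := by rw [map_one]; ring
  m2 := by rw [map_one]; ring
  m3 := by rw [map_one]; ring
  sA1 := Or.inr ⟨0, isHomogeneous_one _ _, rfl⟩
  sB1 := Or.inr ⟨0, by
    have h := isHomogeneous_C (Fin 2) (-1 : K)
    rwa [map_neg, map_one] at h, rfl⟩
  sC1 := Or.inr ⟨0, isHomogeneous_one _ _, rfl⟩
  sA2 := Or.inr ⟨1, (isHomogeneous_X K 1).sub (isHomogeneous_X K 0), rfl⟩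
  sB2 := Or.inl rfl
  sC2 := Or.inr ⟨1, (isHomogeneous_X K 0).neg, rfl⟩

lemma incF (hg : ¬ (X 0 : MvPolynomial (Fin 2) K) ∣ g) :
    Nonempty (SDat K f g h df dg dh) →
    Nonempty (SDat K ((X 0) * f) g h (df + 1) dg dh) := by
  rintro ⟨S⟩
  obtain ⟨S'⟩ := step (X 0) (X 1) ![0, 1] prime_X0 (isHomogeneous_X _ _)
    (isHomogeneous_X _ _) (by intro i; fin_cases i <;> simp) hg S.rot
  exact ⟨S'.rot.rot⟩

lemma incG (hh : ¬ (X 1 : MvPolynomial (Fin 2) K) ∣ h) :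
    Nonempty (SDat K f g h df dg dh) →
    Nonempty (SDat K f ((X 1) * g) h df (dg + 1) dh) := by
  rintro ⟨S⟩
  obtain ⟨S'⟩ := step (X 1) (X 0) ![1, 0] prime_X1 (isHomogeneous_X _ _)
    (isHomogeneous_X _ _) (by intro i; fin_cases i <;> simp) hh S.rot.rot
  exact ⟨S'.rot⟩

lemma incH (hf : ¬ (X 1 - X 0 : MvPolynomial (Fin 2) K) ∣ f) :
    Nonempty (SDat K f g h df dg dh) →
    Nonempty (SDat K f g ((X 1 - X 0) * h) df dg (dh + 1)) := by
  rintro ⟨S⟩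
  obtain ⟨S'⟩ := step (X 1 - X 0) (X 0) ![1, 1] prime_X1_sub_X0
    ((isHomogeneous_X _ _).sub (isHomogeneous_X _ _))
    (isHomogeneous_X _ _) (by intro i; fin_cases i <;> simp) hf S
  exact ⟨S'⟩

theorem SD_all (a b c : ℕ) :
    Nonempty (SDat K ((X 0) ^ (a + 1)) ((X 1) ^ (b + 1)) ((X 1 - X 0) ^ (c + 1))
      (a + 1) (b + 1) (c + 1)) := by
  have h1 : ∀ a : ℕ, Nonempty (SDat K ((X 0) ^ (a + 1)) (X 1) (X 1 - X 0) (a + 1) 1 1) := by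
    intro a
    induction a with
    | zero => simp only [zero_add, pow_one]; exact ⟨base⟩
    | succ n ih =>
        have hnd : ¬ (X 0 : MvPolynomial (Fin 2) K) ∣ X 1 :=
          not_dvd_of_eval _ _ ![0, 1] (by simp) (by simp)
        have h2 := incF hnd ih
        rwa [show (X 0 : MvPolynomial (Fin 2) K) * (X 0) ^ (n + 1) = (X 0) ^ (n + 1 + 1) from
          (pow_succ' _ _).symm] at h2
  have h2 : ∀ a b : ℕ, Nonempty (SDat K ((X 0) ^ (a + 1)) ((X 1) ^ (b + 1)) (X 1 - X 0)
      (a + 1) (b + 1) 1) := by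
    intro a b
    induction b with
    | zero => simpa only [zero_add, pow_one] using h1 a
    | succ n ih =>
        have hnd : ¬ (X 1 : MvPolynomial (Fin 2) K) ∣ (X 1 - X 0) :=
          not_dvd_of_eval _ _ ![1, 0] (by simp) (by simp)
        have h3 := incG hnd ih
        rwa [show (X 1 : MvPolynomial (Fin 2) K) * (X 1) ^ (n + 1) = (X 1) ^ (n + 1 + 1) from
          (pow_succ' _ _).symm] at h3
  induction c with
  | zero => simpa only [zero_add, pow_one] using h2 a b
  | succ n ih =>
      have hnd : ¬ (X 1 - X 0 : MvPolynomial (Fin 2) K) ∣ (X 0) ^ (a + 1) :=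
        not_dvd_of_eval _ _ ![1, 1] (by simp) (by simp)
      have h3 := incH hnd ih
      rwa [show (X 1 - X 0 : MvPolynomial (Fin 2) K) * (X 1 - X 0) ^ (n + 1)
        = (X 1 - X 0) ^ (n + 1 + 1) from (pow_succ' _ _).symm] at h3
local notation "R3" => MvPolynomial (Fin 3) K

theorem span_of_saito {u v w : MvPolynomial (Fin 3) K} {a b c : ℕ}
    (hw : Prime w) (hwu : ¬ w ∣ u)
    {A1 B1 C1 A2 B2 C2 : MvPolynomial (Fin 3) K} {lam : K} (hlam : lam ≠ 0)
    (syz1 : A1 * u ^ a + B1 * v ^ b + C1 * w ^ c = 0)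
    (syz2 : A2 * u ^ a + B2 * v ^ b + C2 * w ^ c = 0)
    (m3 : A1 * B2 - B1 * A2 = C lam * w ^ c)
    {A B Cc : MvPolynomial (Fin 3) K}
    (hσ : A * u ^ a + B * v ^ b + Cc * w ^ c = 0) :
    ∃ p q : MvPolynomial (Fin 3) K,
      A = p * A1 + q * A2 ∧ B = p * B1 + q * B2 ∧ Cc = p * C1 + q * C2 := by
  have hwua : ¬ w ∣ u ^ a := fun hd => hwu (hw.dvd_of_dvd_pow hd)
  have e1 : u ^ a * (A * B2 - A2 * B) = w ^ c * (C2 * B - Cc * B2) := by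
    linear_combination B2 * hσ - B * syz2
  have e2 : u ^ a * (A1 * B - A * B1) = w ^ c * (Cc * B1 - C1 * B) := by
    linear_combination B * syz1 - B1 * hσ
  obtain ⟨p', hp'⟩ := hw.pow_dvd_of_dvd_mul_left c hwua ⟨_, e1⟩
  obtain ⟨q', hq'⟩ := hw.pow_dvd_of_dvd_mul_left c hwua ⟨_, e2⟩
  have hCl : (C lam : MvPolynomial (Fin 3) K) * C lam⁻¹ = 1 := by
    rw [← map_mul, mul_inv_cancel₀ hlam, map_one]
  have hClam0 : (C lam : MvPolynomial (Fin 3) K) ≠ 0 := by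
    simpa using hlam
  have hwc0 : (w : MvPolynomial (Fin 3) K) ^ c ≠ 0 := pow_ne_zero _ hw.ne_zero
  set p : MvPolynomial (Fin 3) K := C lam⁻¹ * p' with hp
  set q : MvPolynomial (Fin 3) K := C lam⁻¹ * q' with hq
  have hA : A = p * A1 + q * A2 := by
    apply mul_left_cancel₀ (mul_ne_zero hClam0 hwc0)
    rw [hp, hq]
    linear_combination -A * m3 + A1 * hp' + A2 * hq'
      - (w ^ c * (A1 * p' + A2 * q')) * hCl
  have hB : B = p * B1 + q * B2 := by
    apply mul_left_cancel₀ (mul_ne_zero hClam0 hwc0)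
    rw [hp, hq]
    linear_combination -B * m3 + B1 * hp' + B2 * hq'
      - (w ^ c * (B1 * p' + B2 * q')) * hCl
  refine ⟨p, q, hA, hB, ?_⟩
  have h5 : (A - (p * A1 + q * A2)) * u ^ a + (B - (p * B1 + q * B2)) * v ^ b
      + (Cc - (p * C1 + q * C2)) * w ^ c = 0 := by
    linear_combination hσ - p * syz1 - q * syz2
  rw [← hA, ← hB] at h5
  simp only [sub_self, zero_mul, zero_add] at h5
  rcases mul_eq_zero.mp h5 with h6 | h6
  · exact sub_eq_zero.mp h6
  · exact absurd h6 hwc0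

theorem indep_of_saito {u v w : MvPolynomial (Fin 3) K} {a b c : ℕ}
    {A1 B1 C1 A2 B2 C2 : MvPolynomial (Fin 3) K} {lam : K} (hlam : lam ≠ 0)
    (hu0 : u ≠ 0) (hw0 : w ≠ 0)
    (m1 : B1 * C2 - C1 * B2 = C lam * u ^ a)
    (m3 : A1 * B2 - B1 * A2 = C lam * w ^ c)
    {g0 g1 : MvPolynomial (Fin 3) K}
    (hA : g0 * A1 + g1 * A2 = 0) (hB : g0 * B1 + g1 * B2 = 0)
    (hC : g0 * C1 + g1 * C2 = 0) : g0 = 0 ∧ g1 = 0 := by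
  have hClam0 : (C lam : MvPolynomial (Fin 3) K) ≠ 0 := by simpa using hlam
  have hwc0 : w ^ c ≠ 0 := pow_ne_zero _ hw0
  have huc0 : u ^ a ≠ 0 := pow_ne_zero _ hu0
  have hg0 : g0 * (C lam * w ^ c) = 0 := by
    linear_combination B2 * hA - A2 * hB - g0 * m3
  have hg00 : g0 = 0 := by
    rcases mul_eq_zero.mp hg0 with h | h
    · exact h
    · exact absurd h (mul_ne_zero hClam0 hwc0)
  subst hg00
  rw [zero_mul, zero_add] at hA hB hC
  constructor
  · rfl
  by_contra hg1
  have hA2 : A2 = 0 := (mul_eq_zero.mp hA).resolve_left hg1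
  have hB2 : B2 = 0 := (mul_eq_zero.mp hB).resolve_left hg1
  have hC2 : C2 = 0 := (mul_eq_zero.mp hC).resolve_left hg1
  rw [hB2, hC2, mul_zero, mul_zero, sub_zero] at m1
  exact absurd m1.symm (mul_ne_zero hClam0 huc0)
theorem saito3 (a b c : ℕ) :
    ∃ (A1 B1 C1 A2 B2 C2 : MvPolynomial (Fin 3) K) (lam : K), lam ≠ 0 ∧
    A1 * (X 0 - X 1) ^ (a + 1) + B1 * (X 0 - X 2) ^ (b + 1) + C1 * (X 1 - X 2) ^ (c + 1) = 0 ∧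
    A2 * (X 0 - X 1) ^ (a + 1) + B2 * (X 0 - X 2) ^ (b + 1) + C2 * (X 1 - X 2) ^ (c + 1) = 0 ∧
    B1 * C2 - C1 * B2 = C lam * (X 0 - X 1) ^ (a + 1) ∧
    C1 * A2 - A1 * C2 = C lam * (X 0 - X 2) ^ (b + 1) ∧
    A1 * B2 - B1 * A2 = C lam * (X 1 - X 2) ^ (c + 1) := by
  obtain ⟨S⟩ := SD_all (K := K) a b c
  have hφ : ∀ P Q : MvPolynomial (Fin 2) K, P = Q →
      aeval (R := K) (![X 0 - X 1, X 0 - X 2] : Fin 2 → MvPolynomial (Fin 3) K) P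
        = aeval (R := K) (![X 0 - X 1, X 0 - X 2] : Fin 2 → MvPolynomial (Fin 3) K) Q := fun P Q hpq => by rw [hpq]
  have hx : aeval (R := K) (![X 0 - X 1, X 0 - X 2] : Fin 2 → MvPolynomial (Fin 3) K) (X 0) = (X 0 - X 1 : MvPolynomial (Fin 3) K) := by
    simp
  have hy : aeval (R := K) (![X 0 - X 1, X 0 - X 2] : Fin 2 → MvPolynomial (Fin 3) K) (X 1) = (X 0 - X 2 : MvPolynomial (Fin 3) K) := by
    simp
  have hz : aeval (R := K) (![X 0 - X 1, X 0 - X 2] : Fin 2 → MvPolynomial (Fin 3) K) (X 1 - X 0) = (X 1 - X 2 : MvPolynomial (Fin 3) K) := by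
    rw [map_sub, hx, hy]
    ring
  have hc : ∀ t : K, aeval (R := K) (![X 0 - X 1, X 0 - X 2] : Fin 2 → MvPolynomial (Fin 3) K) (C t) = (C t : MvPolynomial (Fin 3) K) := by
    intro t
    rw [aeval_C, algebraMap_eq]
  refine ⟨aeval (R := K) (![X 0 - X 1, X 0 - X 2] : Fin 2 → MvPolynomial (Fin 3) K) S.A1, aeval (R := K) (![X 0 - X 1, X 0 - X 2] : Fin 2 → MvPolynomial (Fin 3) K) S.B1, aeval (R := K) (![X 0 - X 1, X 0 - X 2] : Fin 2 → MvPolynomial (Fin 3) K) S.C1, aeval (R := K) (![X 0 - X 1, X 0 - X 2] : Fin 2 → MvPolynomial (Fin 3) K) S.A2, aeval (R := K) (![X 0 - X 1, X 0 - X 2] : Fin 2 → MvPolynomial (Fin 3) K) S.B2, aeval (R := K) (![X 0 - X 1, X 0 - X 2] : Fin 2 → MvPolynomial (Fin 3) K) S.C2, S.lam, S.hlam, ?_, ?_, ?_, ?_, ?_⟩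
  · have h := hφ _ _ S.syz1
    rw [map_add, map_add, map_mul, map_mul, map_mul, map_pow, map_pow, map_pow,
      hx, hy, hz, map_zero] at h
    exact h
  · have h := hφ _ _ S.syz2
    rw [map_add, map_add, map_mul, map_mul, map_mul, map_pow, map_pow, map_pow,
      hx, hy, hz, map_zero] at h
    exact h
  · have h := hφ _ _ S.m1
    rw [map_sub, map_mul, map_mul, map_mul, map_pow, hx, hc] at h
    exact h
  · have h := hφ _ _ S.m2
    rw [map_sub, map_mul, map_mul, map_mul, map_pow, hy, hc] at h
    exact h
  · have h := hφ _ _ S.m3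
    rw [map_sub, map_mul, map_mul, map_mul, map_pow, hz, hc] at h
    exact h

end M15

/-- For the `A_2` (triangle) multiarrangement, the module of multiderivations
(identified with `{θ : Fin 3 → S | θ i - θ j ∈ ⟨(x_i-x_j)^{m_{ij}}⟩}` via
`θ = ∑ θ_i ∂_i`) is isomorphic to `S ⊕ syz(J)`; in particular it is free. -/
theorem stmt15 (K : Type*) [Field K] [CharZero K] (m01 m02 m12 : ℕ)
    (h01 : 0 < m01) (h02 : 0 < m02) (h12 : 0 < m12)
    (D Syz : Submodule (MvPolynomial (Fin 3) K) (Fin 3 → MvPolynomial (Fin 3) K))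
    (hD : ∀ θ : Fin 3 → MvPolynomial (Fin 3) K, θ ∈ D ↔
      (θ 0 - θ 1 ∈ Ideal.span {(X 0 - X 1 : MvPolynomial (Fin 3) K) ^ m01} ∧
       θ 0 - θ 2 ∈ Ideal.span {(X 0 - X 2 : MvPolynomial (Fin 3) K) ^ m02} ∧
       θ 1 - θ 2 ∈ Ideal.span {(X 1 - X 2 : MvPolynomial (Fin 3) K) ^ m12}))
    (hSyz : ∀ g : Fin 3 → MvPolynomial (Fin 3) K, g ∈ Syz ↔
      g 0 * (X 0 - X 1) ^ m01 + g 1 * (X 0 - X 2) ^ m02 +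
        g 2 * (X 1 - X 2) ^ m12 = 0) :
    Nonempty (D ≃ₗ[MvPolynomial (Fin 3) K] (MvPolynomial (Fin 3) K × Syz)) ∧
      Module.Free (MvPolynomial (Fin 3) K) D := by
  obtain ⟨a, rfl⟩ : ∃ a, m01 = a + 1 := ⟨m01 - 1, by omega⟩
  obtain ⟨b, rfl⟩ : ∃ b, m02 = b + 1 := ⟨m02 - 1, by omega⟩
  obtain ⟨c, rfl⟩ : ∃ c, m12 = c + 1 := ⟨m12 - 1, by omega⟩
  classical
  obtain ⟨A1, B1, C1, A2, B2, C2, lam, hlam, hs1, hs2, hm1, hm2, hm3⟩ :=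
    M15.saito3 (K := K) a b c
  have hwp : Prime (X 1 - X 2 : MvPolynomial (Fin 3) K) := M15.prime_w3
  have hwu : ¬ (X 1 - X 2 : MvPolynomial (Fin 3) K) ∣ (X 0 - X 1) :=
    M15.not_dvd_of_eval _ _ ![1, 0, 0] (by simp) (by simp)
  have hu0 : (X 0 - X 1 : MvPolynomial (Fin 3) K) ≠ 0 :=
    M15.ne_zero_of_eval _ ![1, 0, 0] (by simp)
  have hv0 : (X 0 - X 2 : MvPolynomial (Fin 3) K) ≠ 0 :=
    M15.ne_zero_of_eval _ ![1, 0, 0] (by simp)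
  have hw0 : (X 1 - X 2 : MvPolynomial (Fin 3) K) ≠ 0 := hwp.ne_zero
  have hf1 : ((X 0 - X 1 : MvPolynomial (Fin 3) K) ^ (a + 1)) ≠ 0 := pow_ne_zero _ hu0
  have hf2 : ((X 0 - X 2 : MvPolynomial (Fin 3) K) ^ (b + 1)) ≠ 0 := pow_ne_zero _ hv0
  have hf3 : ((X 1 - X 2 : MvPolynomial (Fin 3) K) ^ (c + 1)) ≠ 0 := pow_ne_zero _ hw0
  have hθ1 : (![A1, B1, C1] : Fin 3 → MvPolynomial (Fin 3) K) ∈ Syz :=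
    (hSyz _).mpr (by simpa using hs1)
  have hθ2 : (![A2, B2, C2] : Fin 3 → MvPolynomial (Fin 3) K) ∈ Syz :=
    (hSyz _).mpr (by simpa using hs2)
  set v2 : Fin 2 → ↥Syz := ![⟨![A1, B1, C1], hθ1⟩, ⟨![A2, B2, C2], hθ2⟩] with hv2
  have hli : LinearIndependent (MvPolynomial (Fin 3) K) v2 := by
    rw [Fintype.linearIndependent_iff]
    intro g hg
    have hg' : g 0 • (![A1, B1, C1] : Fin 3 → MvPolynomial (Fin 3) K)
        + g 1 • (![A2, B2, C2] : Fin 3 → MvPolynomial (Fin 3) K) = 0 := by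
      have h := congrArg (Subtype.val) hg
      simpa [hv2, Fin.sum_univ_two] using h
    have e0 : g 0 * A1 + g 1 * A2 = 0 := by
      simpa [Pi.add_apply, Pi.smul_apply, smul_eq_mul] using congr_fun hg' 0
    have e1 : g 0 * B1 + g 1 * B2 = 0 := by
      simpa [Pi.add_apply, Pi.smul_apply, smul_eq_mul] using congr_fun hg' 1
    have e2 : g 0 * C1 + g 1 * C2 = 0 := by
      simpa [Pi.add_apply, Pi.smul_apply, smul_eq_mul] using congr_fun hg' 2
    obtain ⟨h0, h1⟩ := M15.indep_of_saito (v := X 0 - X 2) (b := b + 1) hlam hu0 hw0 hm1 hm3 e0 e1 e2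
    intro i
    fin_cases i
    · exact h0
    · exact h1
  have hsp : ⊤ ≤ Submodule.span (MvPolynomial (Fin 3) K) (Set.range v2) := by
    rintro ⟨σ, hσmem⟩ -
    have hs := (hSyz σ).mp hσmem
    obtain ⟨p, q, hA, hB, hC⟩ := M15.span_of_saito hwp hwu hlam hs1 hs2 hm3 hs
    have heq : (⟨σ, hσmem⟩ : ↥Syz) = p • v2 0 + q • v2 1 := by
      apply Subtype.ext
      funext i
      have hval : σ i = p * ((v2 0 : Fin 3 → MvPolynomial (Fin 3) K) i)
          + q * ((v2 1 : Fin 3 → MvPolynomial (Fin 3) K) i) := by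
        fin_cases i
        · simpa [hv2] using hA
        · simpa [hv2] using hB
        · simpa [hv2] using hC
      simpa [Pi.add_apply, smul_eq_mul] using hval
    rw [heq]
    exact Submodule.add_mem _ (Submodule.smul_mem _ _ (Submodule.subset_span ⟨0, rfl⟩))
      (Submodule.smul_mem _ _ (Submodule.subset_span ⟨1, rfl⟩))
  have bSyz : Module.Basis (Fin 2) (MvPolynomial (Fin 3) K) ↥Syz := Module.Basis.mk hli hsp
  haveI hfreeS : Module.Free (MvPolynomial (Fin 3) K) ↥Syz := Module.Free.of_basis bSyz
  let Φ : (MvPolynomial (Fin 3) K × ↥Syz) →ₗ[MvPolynomial (Fin 3) K]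
      (Fin 3 → MvPolynomial (Fin 3) K) :=
    { toFun := fun sg => ![sg.1,
        sg.1 - (sg.2 : Fin 3 → MvPolynomial (Fin 3) K) 0 * (X 0 - X 1) ^ (a + 1),
        sg.1 + (sg.2 : Fin 3 → MvPolynomial (Fin 3) K) 1 * (X 0 - X 2) ^ (b + 1)]
      map_add' := by
        rintro ⟨s, gs⟩ ⟨t, gt⟩
        funext i
        fin_cases i <;>
          simp [Submodule.coe_add, Pi.add_apply] <;> ring
      map_smul' := by
        rintro r ⟨s, gs⟩
        funext i
        fin_cases i <;>
          simp [Submodule.coe_smul, Pi.smul_apply, smul_eq_mul, mul_add, mul_sub] <;> ring }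
  have Φdef : ∀ sg : MvPolynomial (Fin 3) K × ↥Syz, Φ sg = ![sg.1,
      sg.1 - (sg.2 : Fin 3 → MvPolynomial (Fin 3) K) 0 * (X 0 - X 1) ^ (a + 1),
      sg.1 + (sg.2 : Fin 3 → MvPolynomial (Fin 3) K) 1 * (X 0 - X 2) ^ (b + 1)] :=
    fun _ => rfl
  have hker : ∀ sg : MvPolynomial (Fin 3) K × ↥Syz, Φ sg = 0 → sg = 0 := by
    rintro ⟨s, g⟩ h0
    rw [Φdef] at h0
    have h00 : s = 0 := by simpa using congr_fun h0 0
    have h01 : (g : Fin 3 → MvPolynomial (Fin 3) K) 0 = 0 := by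
      have h := congr_fun h0 1
      rw [h00] at h
      simp at h
      rcases h with h | h
      · exact h
      · exact absurd h hu0
    have h02 : (g : Fin 3 → MvPolynomial (Fin 3) K) 1 = 0 := by
      have h := congr_fun h0 2
      rw [h00] at h
      simp at h
      rcases h with h | h
      · exact h
      · exact absurd h hv0
    have hgs := (hSyz _).mp g.2
    rw [h01, h02, zero_mul, zero_mul, zero_add, zero_add] at hgs
    have h03 : (g : Fin 3 → MvPolynomial (Fin 3) K) 2 = 0 := by
      rcases mul_eq_zero.mp hgs with h | h
      · exact h
      · exact absurd h hf3
    have hgz : g = 0 := Subtype.ext (funext fun i => by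
      fin_cases i
      · exact h01
      · exact h02
      · exact h03)
    rw [h00, hgz]
    rfl
  have hinj : Function.Injective Φ := by
    rw [← LinearMap.ker_eq_bot]
    exact LinearMap.ker_eq_bot'.mpr hker
  have hrange : LinearMap.range Φ = D := by
    apply le_antisymm
    · rintro τ ⟨⟨s, g⟩, rfl⟩
      rw [hD]
      refine ⟨?_, ?_, ?_⟩
      · have hc1 : Φ (s, g) 0 - Φ (s, g) 1
            = (g : Fin 3 → MvPolynomial (Fin 3) K) 0 * (X 0 - X 1) ^ (a + 1) := by
          rw [Φdef]
          simp
        rw [hc1, Ideal.mem_span_singleton]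
        exact dvd_mul_left _ _
      · have hc2 : Φ (s, g) 0 - Φ (s, g) 2
            = -((g : Fin 3 → MvPolynomial (Fin 3) K) 1 * (X 0 - X 2) ^ (b + 1)) := by
          rw [Φdef]
          simp
        rw [hc2, Ideal.mem_span_singleton]
        exact (dvd_mul_left _ _).neg_right
      · have hgs := (hSyz _).mp g.2
        have hc3 : Φ (s, g) 1 - Φ (s, g) 2
            = (g : Fin 3 → MvPolynomial (Fin 3) K) 2 * (X 1 - X 2) ^ (c + 1) := by
          rw [Φdef]
          simp only [Matrix.cons_val_one, Matrix.head_cons, Matrix.cons_val_two,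
            Matrix.tail_cons, Matrix.cons_val_zero]
          linear_combination -hgs
        rw [hc3, Ideal.mem_span_singleton]
        exact dvd_mul_left _ _
    · intro τ hmem
      rw [hD] at hmem
      obtain ⟨h01m, h02m, h12m⟩ := hmem
      rw [Ideal.mem_span_singleton] at h01m h02m h12m
      obtain ⟨r01, hr01⟩ := h01m
      obtain ⟨r02, hr02⟩ := h02m
      obtain ⟨r12, hr12⟩ := h12m
      have hgmem : (![r01, -r02, r12] : Fin 3 → MvPolynomial (Fin 3) K) ∈ Syz :=
        (hSyz _).mpr (by
          simp only [Matrix.cons_val_zero, Matrix.cons_val_one, Matrix.head_cons,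
            Matrix.cons_val_two, Matrix.tail_cons]
          linear_combination -hr01 + hr02 - hr12)
      refine ⟨(τ 0, ⟨![r01, -r02, r12], hgmem⟩), ?_⟩
      rw [Φdef]
      funext i
      fin_cases i
      · rfl
      · show τ 0 - (![r01, -r02, r12] : Fin 3 → MvPolynomial (Fin 3) K) 0
          * (X 0 - X 1) ^ (a + 1) = τ 1
        simp only [Matrix.cons_val_zero]
        linear_combination hr01
      · show τ 0 + (![r01, -r02, r12] : Fin 3 → MvPolynomial (Fin 3) K) 1
          * (X 0 - X 2) ^ (b + 1) = τ 2
        simp only [Matrix.cons_val_one, Matrix.head_cons, Matrix.cons_val_zero]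
        linear_combination hr02
  have equiv : (MvPolynomial (Fin 3) K × ↥Syz) ≃ₗ[MvPolynomial (Fin 3) K] ↥D :=
    (LinearEquiv.ofInjective Φ hinj).trans (LinearEquiv.ofEq _ _ hrange)
  exact ⟨⟨equiv.symm⟩, Module.Free.of_equiv equiv⟩
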